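/- Let P be an operator on an N-dimensional Hilbert space, z ∈ ℂ, and let 0 ≤ t_1 ≤ ⋯ ≤ t_N be the square roots of the eigenvalues of Q = (P-z)*(P-z), with orthonormal eigenbases e_i of Q and f_i of (P-z)(P-z)* chosen so that (P-z)e_i = t_i f_i and (P-z)* f_i = t_i e_i. Fix α > 0 and let A = max{i : t_i² ≤ α}. With R_+ = Σ_{i≤A} δ_i ⊗ e_i and R_- = Σ_{i≤A} f_i ⊗ δ_i, the block matrix [[P - z, R_-],[R_+, 0]] is invertible with inverse [[Σ_{i>A} t_i^{-1} e_i ⊗ f_i, Σ_{i≤A} e_i ⊗ δ_i],[Σ_{i≤A} δ_i ⊗ f_i, -Σ_{i≤A} t_i δ_i ⊗ δ_i]], provided t_i > 0 for i > A. -/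

import Mathlib

open ContinuousLinearMap Finset

/-- rank-one operator `(u ⊗ v)(w) = ⟨w, v⟩ u` (inner product linear in `w`). -/
noncomputable def outerCLM {E F : Type*} [NormedAddCommGroup E] [InnerProductSpace ℂ E]
    [NormedAddCommGroup F] [InnerProductSpace ℂ F] (u : F) (v : E) : E →L[ℂ] F :=
  (innerSL ℂ v).smulRight u

/-- Grushin problem from the singular value decomposition: with singular data
`(P-z)e_i = t_i f_i`, `(P-z)* f_i = t_i e_i`, `A = max{i : t_i² ≤ α}`,
`R₊ = Σ_{i≤A} δ_i ⊗ e_i`, `R₋ = Σ_{i≤A} f_i ⊗ δ_i`, the block matrix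
`[[P-z, R₋],[R₊,0]]` is invertible with explicit inverse
`[[Σ_{i>A} t_i⁻¹ e_i ⊗ f_i, Σ_{i≤A} e_i ⊗ δ_i],[Σ_{i≤A} δ_i ⊗ f_i, -Σ_{i≤A} t_i δ_i ⊗ δ_i]]`,
provided `t_i > 0` for `i > A`. -/
lemma outerCLM_apply {E F : Type*} [NormedAddCommGroup E] [InnerProductSpace ℂ E]
    [NormedAddCommGroup F] [InnerProductSpace ℂ F] (u : F) (v w : E) :
    outerCLM u v w = (inner ℂ v w : ℂ) • u := rfl

theorem stmt6 (N A : ℕ) (hAN : A ≤ N)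
    (H : Type*) [NormedAddCommGroup H] [InnerProductSpace ℂ H]
    [FiniteDimensional ℂ H] [CompleteSpace H] (hdim : Module.finrank ℂ H = N)
    (P : H →L[ℂ] H) (z : ℂ)
    (t : Fin N → ℝ) (ht_nonneg : ∀ i, 0 ≤ t i) (ht_mono : Monotone t)
    (e f : Fin N → H) (he : Orthonormal ℂ e) (hf : Orthonormal ℂ f)
    (hPe : ∀ i, (P - z • ContinuousLinearMap.id ℂ H) (e i) = (t i : ℂ) • f i)
    (hPf : ∀ i, (ContinuousLinearMap.adjoint (P - z • ContinuousLinearMap.id ℂ H)) (f i)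
      = (t i : ℂ) • e i)
    (α : ℝ) (hα : 0 < α)
    (hA : ∀ i : Fin N, (i : ℕ) < A ↔ t i ^ 2 ≤ α)
    (ht_pos : ∀ i : Fin N, A ≤ (i : ℕ) → 0 < t i)
    (Rp : H →L[ℂ] EuclideanSpace ℂ (Fin A))
    (hRp : Rp = ∑ j : Fin A, outerCLM (EuclideanSpace.single j (1:ℂ)) (e (Fin.castLE hAN j)))
    (Rm : EuclideanSpace ℂ (Fin A) →L[ℂ] H)
    (hRm : Rm = ∑ j : Fin A, outerCLM (f (Fin.castLE hAN j)) (EuclideanSpace.single j (1:ℂ)))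
    (Pblk : H × EuclideanSpace ℂ (Fin A) →L[ℂ] H × EuclideanSpace ℂ (Fin A))
    (hPblk : ∀ u v, Pblk (u, v) = ((P - z • ContinuousLinearMap.id ℂ H) u + Rm v, Rp u))
    (E0 : H →L[ℂ] H)
    (hE0 : E0 = ∑ i ∈ Finset.univ.filter (fun i : Fin N => A ≤ (i : ℕ)),
      (t i)⁻¹ • outerCLM (e i) (f i))
    (Ep : EuclideanSpace ℂ (Fin A) →L[ℂ] H)
    (hEp : Ep = ∑ j : Fin A, outerCLM (e (Fin.castLE hAN j)) (EuclideanSpace.single j (1:ℂ)))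
    (Em : H →L[ℂ] EuclideanSpace ℂ (Fin A))
    (hEm : Em = ∑ j : Fin A, outerCLM (EuclideanSpace.single j (1:ℂ)) (f (Fin.castLE hAN j)))
    (Emp : EuclideanSpace ℂ (Fin A) →L[ℂ] EuclideanSpace ℂ (Fin A))
    (hEmp : Emp = -∑ j : Fin A, (t (Fin.castLE hAN j)) •
      outerCLM (EuclideanSpace.single j (1:ℂ)) (EuclideanSpace.single j (1:ℂ)))
    (Eblk : H × EuclideanSpace ℂ (Fin A) →L[ℂ] H × EuclideanSpace ℂ (Fin A))
    (hEblk : ∀ u v, Eblk (u, v) = (E0 u + Ep v, Em u + Emp v)) :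
    Pblk.comp Eblk = ContinuousLinearMap.id ℂ _ ∧
    Eblk.comp Pblk = ContinuousLinearMap.id ℂ _ := by
  classical
  set T := P - z • ContinuousLinearMap.id ℂ H with hT
  -- real smul as complex smul
  have hsmulR : ∀ (r : ℝ) (x : H), (r : ℂ) • x = r • x := by
    intro r x
    rw [← Complex.coe_algebraMap, algebraMap_smul]
  have hsmulE : ∀ (r : ℝ) (x : EuclideanSpace ℂ (Fin A)), (r : ℂ) • x = r • x := by
    intro r x
    rw [← Complex.coe_algebraMap, algebraMap_smul]
  have hinner_e : ∀ i j, (inner ℂ (e i) (e j) : ℂ) = if i = j then 1 else 0 := fun i j =>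
    orthonormal_iff_ite.mp he i j
  have hinner_f : ∀ i j, (inner ℂ (f i) (f j) : ℂ) = if i = j then 1 else 0 := fun i j =>
    orthonormal_iff_ite.mp hf i j
  -- values on basis vectors
  have hE0f : ∀ k, E0 (f k) = if A ≤ (k : ℕ) then (t k)⁻¹ • e k else 0 := by
    intro k
    rw [hE0, ContinuousLinearMap.sum_apply]
    simp only [ContinuousLinearMap.smul_apply, outerCLM_apply, hinner_f]
    rw [Finset.sum_congr rfl (fun i _ => by
      rw [show ((if i = k then (1:ℂ) else 0) • e i) = if i = k then (1:ℂ) • e i else 0 by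
        split <;> simp])]
    simp only [one_smul, smul_ite, smul_zero]
    rw [Finset.sum_ite_eq' _ k (fun i => (t i)⁻¹ • e i)]
    simp [Finset.mem_filter]
  have hRms : ∀ j : Fin A, Rm (EuclideanSpace.single j (1:ℂ)) = f (Fin.castLE hAN j) := by
    intro j
    rw [hRm, ContinuousLinearMap.sum_apply]
    simp only [outerCLM_apply, EuclideanSpace.inner_single_left, map_one, one_mul,
      EuclideanSpace.single_apply]
    rw [Finset.sum_congr rfl (fun i _ => by
      rw [show ((if i = j then (1:ℂ) else 0) • f (Fin.castLE hAN i))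
        = if i = j then (1:ℂ) • f (Fin.castLE hAN i) else 0 by split <;> simp])]
    rw [Finset.sum_ite_eq' _ j (fun i => (1:ℂ) • f (Fin.castLE hAN i))]
    simp
  have hEps : ∀ j : Fin A, Ep (EuclideanSpace.single j (1:ℂ)) = e (Fin.castLE hAN j) := by
    intro j
    rw [hEp, ContinuousLinearMap.sum_apply]
    simp only [outerCLM_apply, EuclideanSpace.inner_single_left, map_one, one_mul,
      EuclideanSpace.single_apply]
    rw [Finset.sum_congr rfl (fun i _ => by
      rw [show ((if i = j then (1:ℂ) else 0) • e (Fin.castLE hAN i))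
        = if i = j then (1:ℂ) • e (Fin.castLE hAN i) else 0 by split <;> simp])]
    rw [Finset.sum_ite_eq' _ j (fun i => (1:ℂ) • e (Fin.castLE hAN i))]
    simp
  have hEmps : ∀ j : Fin A, Emp (EuclideanSpace.single j (1:ℂ))
      = -((t (Fin.castLE hAN j) : ℂ) • EuclideanSpace.single j (1:ℂ)) := by
    intro j
    rw [hEmp]
    simp only [ContinuousLinearMap.neg_apply, ContinuousLinearMap.sum_apply,
      ContinuousLinearMap.smul_apply, outerCLM_apply, EuclideanSpace.inner_single_left, map_one, one_mul,
      EuclideanSpace.single_apply]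
    rw [Finset.sum_congr rfl (fun i _ => by
      rw [show (t (Fin.castLE hAN i) • (if i = j then (1:ℂ) else 0) • EuclideanSpace.single i (1:ℂ))
        = if i = j then t (Fin.castLE hAN i) • (1:ℂ) • EuclideanSpace.single i (1:ℂ) else 0 by
        split <;> simp])]
    rw [Finset.sum_ite_eq' _ j
      (fun i => t (Fin.castLE hAN i) • (1:ℂ) • EuclideanSpace.single i (1:ℂ))]
    simp [hsmulE]
  have hRpe : ∀ k : Fin N, Rp (e k)
      = if h : (k : ℕ) < A then EuclideanSpace.single (⟨k, h⟩ : Fin A) (1:ℂ) else 0 := by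
    intro k
    rw [hRp, ContinuousLinearMap.sum_apply]
    simp only [outerCLM_apply, hinner_e]
    rw [Finset.sum_congr rfl (fun i _ => by
      rw [show ((if Fin.castLE hAN i = k then (1:ℂ) else 0) • EuclideanSpace.single i (1:ℂ))
        = if i ∈ (Finset.univ.filter (fun i : Fin A => Fin.castLE hAN i = k)) then
            EuclideanSpace.single i (1:ℂ) else 0 by
        simp only [Finset.mem_filter, Finset.mem_univ, true_and]; split <;> simp])]
    rw [Finset.sum_ite_mem, Finset.univ_inter]
    by_cases h : (k : ℕ) < A
    · rw [dif_pos h]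
      have : Finset.univ.filter (fun i : Fin A => Fin.castLE hAN i = k) = {(⟨k, h⟩ : Fin A)} := by
        ext i
        simp [Fin.ext_iff, Fin.eq_mk_iff_val_eq]
      rw [this, Finset.sum_singleton]
    · rw [dif_neg h]
      have : Finset.univ.filter (fun i : Fin A => Fin.castLE hAN i = k) = ∅ := by
        ext i
        simp only [Finset.mem_filter, Finset.mem_univ, true_and, Finset.notMem_empty, iff_false]
        intro hc
        exact h (hc ▸ i.isLt)
      rw [this, Finset.sum_empty]
  have hEmf : ∀ k : Fin N, Em (f k)
      = if h : (k : ℕ) < A then EuclideanSpace.single (⟨k, h⟩ : Fin A) (1:ℂ) else 0 := by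
    intro k
    rw [hEm, ContinuousLinearMap.sum_apply]
    simp only [outerCLM_apply, hinner_f]
    rw [Finset.sum_congr rfl (fun i _ => by
      rw [show ((if Fin.castLE hAN i = k then (1:ℂ) else 0) • EuclideanSpace.single i (1:ℂ))
        = if i ∈ (Finset.univ.filter (fun i : Fin A => Fin.castLE hAN i = k)) then
            EuclideanSpace.single i (1:ℂ) else 0 by
        simp only [Finset.mem_filter, Finset.mem_univ, true_and]; split <;> simp])]
    rw [Finset.sum_ite_mem, Finset.univ_inter]
    by_cases h : (k : ℕ) < A
    · rw [dif_pos h]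
      have : Finset.univ.filter (fun i : Fin A => Fin.castLE hAN i = k) = {(⟨k, h⟩ : Fin A)} := by
        ext i
        simp [Fin.ext_iff, Fin.eq_mk_iff_val_eq]
      rw [this, Finset.sum_singleton]
    · rw [dif_neg h]
      have : Finset.univ.filter (fun i : Fin A => Fin.castLE hAN i = k) = ∅ := by
        ext i
        simp only [Finset.mem_filter, Finset.mem_univ, true_and, Finset.notMem_empty, iff_false]
        intro hc
        exact h (hc ▸ i.isLt)
      rw [this, Finset.sum_empty]
  have hcast : ∀ (k : Fin N) (h : (k : ℕ) < A), Fin.castLE hAN (⟨(k : ℕ), h⟩ : Fin A) = k := by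
    intro k h
    ext
    rfl
  -- the four basis computations
  have key1 : ∀ k : Fin N, Pblk (Eblk (f k, 0)) = (f k, 0) := by
    intro k
    rw [hEblk, map_zero, map_zero, add_zero, add_zero, hPblk, hE0f, hEmf]
    by_cases h : (k : ℕ) < A
    · rw [if_neg (by omega), dif_pos h, map_zero, map_zero, zero_add, hRms, hcast]
    · rw [if_pos (by omega), dif_neg h, map_zero, add_zero]
      have htk : t k ≠ 0 := ne_of_gt (ht_pos k (by omega))
      refine Prod.ext ?_ ?_
      · show T ((t k)⁻¹ • e k) = f k
        rw [← hsmulR, map_smul, hPe k, smul_smul]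
        rw [show ((((t k)⁻¹ : ℝ) : ℂ) * (t k : ℂ)) = 1 by
          have h1 : (t k : ℂ) ≠ 0 := by exact_mod_cast htk
          push_cast
          field_simp]
        rw [one_smul]
      · show Rp ((t k)⁻¹ • e k) = 0
        rw [← hsmulR, map_smul, hRpe, dif_neg h, smul_zero]
  have key2 : ∀ j : Fin A, Pblk (Eblk (0, EuclideanSpace.single j (1:ℂ)))
      = (0, EuclideanSpace.single j (1:ℂ)) := by
    intro j
    rw [hEblk, map_zero, map_zero, zero_add, zero_add, hPblk, hEps, hEmps]
    refine Prod.ext ?_ ?_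
    · show T (e (Fin.castLE hAN j)) + Rm _ = 0
      rw [map_neg, map_smul, hRms, hPe]
      simp
    · show Rp (e (Fin.castLE hAN j)) = EuclideanSpace.single j (1:ℂ)
      rw [hRpe, dif_pos (by simpa using j.isLt)]
      congr 1
  have key3 : ∀ k : Fin N, Eblk (Pblk (e k, 0)) = (e k, 0) := by
    intro k
    rw [hPblk, map_zero, add_zero]
    rw [show T (e k) = (t k : ℂ) • f k from hPe k]
    rw [hEblk, map_smul, map_smul, hE0f, hEmf, hRpe]
    by_cases h : (k : ℕ) < A
    · rw [if_neg (by omega), dif_pos h, hEps, hEmps, hcast]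
      refine Prod.ext ?_ ?_
      · show (t k : ℂ) • 0 + e k = e k
        rw [smul_zero, zero_add]
      · show (t k : ℂ) • EuclideanSpace.single (⟨(k:ℕ), h⟩ : Fin A) (1:ℂ)
            + -((t k : ℂ) • EuclideanSpace.single (⟨(k:ℕ), h⟩ : Fin A) (1:ℂ)) = 0
        rw [add_neg_cancel]
    · rw [if_pos (by omega), dif_neg h, map_zero, map_zero, smul_zero, add_zero, add_zero]
      have htk : t k ≠ 0 := ne_of_gt (ht_pos k (by omega))
      refine Prod.ext ?_ ?_
      · show (t k : ℂ) • (t k)⁻¹ • e k = e k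
        rw [← hsmulR, smul_smul]
        rw [show ((t k : ℂ) * (((t k)⁻¹ : ℝ) : ℂ)) = 1 by
          have h1 : (t k : ℂ) ≠ 0 := by exact_mod_cast htk
          push_cast
          field_simp]
        rw [one_smul]
      · rfl
  have key4 : ∀ j : Fin A, Eblk (Pblk (0, EuclideanSpace.single j (1:ℂ)))
      = (0, EuclideanSpace.single j (1:ℂ)) := by
    intro j
    rw [hPblk, map_zero, map_zero, zero_add, hRms, hEblk]
    simp only [map_zero, add_zero]
    rw [hE0f, hEmf]
    have h : ((Fin.castLE hAN j : Fin N) : ℕ) < A := by simpa using j.isLt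
    rw [if_neg (by omega), dif_pos h]
    refine Prod.ext ?_ ?_
    · rfl
    · show EuclideanSpace.single (⟨((Fin.castLE hAN j : Fin N) : ℕ), h⟩ : Fin A) (1:ℂ)
          = EuclideanSpace.single j (1:ℂ)
      congr 1
  -- extensionality via bases
  rcases Nat.eq_zero_or_pos N with hN | hN
  · subst hN
    have hA0 : A = 0 := Nat.le_zero.mp hAN
    subst hA0
    have hH : Subsingleton H := (Module.finrank_zero_iff (R := ℂ)).mp hdim
    have : Subsingleton (H × EuclideanSpace ℂ (Fin 0)) := inferInstance
    exact ⟨ContinuousLinearMap.ext fun x => Subsingleton.elim _ _,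
      ContinuousLinearMap.ext fun x => Subsingleton.elim _ _⟩
  · have : Nonempty (Fin N) := ⟨⟨0, hN⟩⟩
    have hcardN : Fintype.card (Fin N) = Module.finrank ℂ H := by simp [hdim]
    have ext2 : ∀ (g : Fin N → H), Orthonormal ℂ g →
        ∀ (L : H × EuclideanSpace ℂ (Fin A) →L[ℂ] H × EuclideanSpace ℂ (Fin A)),
        (∀ k, L (g k, 0) = (g k, 0)) →
        (∀ j : Fin A, L (0, EuclideanSpace.single j (1:ℂ)) = (0, EuclideanSpace.single j (1:ℂ))) →
        L = ContinuousLinearMap.id ℂ (H × EuclideanSpace ℂ (Fin A)) := by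
      intro g hg L h1 h2
      apply ContinuousLinearMap.coe_injective
      apply Module.Basis.ext ((basisOfOrthonormalOfCardEqFinrank hg hcardN).prod
        (EuclideanSpace.basisFun (Fin A) ℂ).toBasis)
      rintro (i | j)
      · have hb : ((basisOfOrthonormalOfCardEqFinrank hg hcardN).prod
            (EuclideanSpace.basisFun (Fin A) ℂ).toBasis) (Sum.inl i) = (g i, 0) := by
          apply Prod.ext
          · rw [Module.Basis.prod_apply_inl_fst, coe_basisOfOrthonormalOfCardEqFinrank]
          · rw [Module.Basis.prod_apply_inl_snd]
        rw [hb]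
        simpa using h1 i
      · have hb : ((basisOfOrthonormalOfCardEqFinrank hg hcardN).prod
            (EuclideanSpace.basisFun (Fin A) ℂ).toBasis) (Sum.inr j)
            = (0, EuclideanSpace.single j (1:ℂ)) := by
          apply Prod.ext
          · rw [Module.Basis.prod_apply_inr_fst]
          · rw [Module.Basis.prod_apply_inr_snd]
            simp [EuclideanSpace.basisFun]
            rfl
        rw [hb]
        simpa using h2 j
    constructor
    · exact ext2 f hf _ (fun k => key1 k) (fun j => key2 j)
    · exact ext2 e he _ (fun k => key3 k) (fun j => key4 j)
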